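/- arXiv:1103.1287 — 2 statements merged into one kernel-verified Lean document; each statement's English description precedes it below -/
import Mathlib

section
/- (First-order optimality: the r-Schmidt eigenvalue equations at a maximizer.) Let L be a Hermitian operator on H, 1 ≤ r ≤ min(d_A, d_B), and suppose the unit vector ψ = Σ_{k=1}^r λ_k e_k ⊗ f_k, with λ_k > 0, (e_k)_{k=1}^r orthonormal in ℂ^{d_A} and (f_k)_{k=1}^r orthonormal in ℂ^{d_B}, attains the maximum f_r(L), and set g := ⟨ψ, L ψ⟩ = f_r(L). Then for all 1 ≤ k, k' ≤ r one has ⟨e_k ⊗ f_{k'}, L ψ⟩ = g λ_k δ_{k,k'}; equivalently, the vector χ := L ψ − g ψ is orthogonal to e_k ⊗ f_{k'} for all 1 ≤ k, k' ≤ r. -/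
open scoped ComplexOrder

noncomputable section

namespace SNpaper

/-- Elementary tensor `x ⊗ y` of vectors, as a vector on the product index set. -/
def tensorVec {dA dB : ℕ} (x : Fin dA → ℂ) (y : Fin dB → ℂ) : Fin dA × Fin dB → ℂ :=
  fun p => x p.1 * y p.2

/-- `ψ` has Schmidt rank at most `r`. -/
def SchmidtRankLE {dA dB : ℕ} (r : ℕ) (ψ : Fin dA × Fin dB → ℂ) : Prop :=
  ∃ (x : Fin r → Fin dA → ℂ) (y : Fin r → Fin dB → ℂ),
    ψ = ∑ k, tensorVec (x k) (y k)

/-- The expectation value `⟨ψ, L ψ⟩`. -/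
def expVal {dA dB : ℕ} (L : Matrix (Fin dA × Fin dB) (Fin dA × Fin dB) ℂ)
    (ψ : Fin dA × Fin dB → ℂ) : ℂ :=
  dotProduct (star ψ) (L.mulVec ψ)

/-- `ψ` is a unit vector. -/
def IsUnitVec {dA dB : ℕ} (ψ : Fin dA × Fin dB → ℂ) : Prop :=
  dotProduct (star ψ) ψ = 1

/-- `f_r(L)`: the maximal expectation value of `L` on unit vectors of Schmidt rank at most `r`. -/
def fr {dA dB : ℕ} (r : ℕ) (L : Matrix (Fin dA × Fin dB) (Fin dA × Fin dB) ℂ) : ℝ :=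
  sSup { t | ∃ ψ, IsUnitVec ψ ∧ SchmidtRankLE r ψ ∧ (expVal L ψ).re = t }

/-- The rank-one projector `|ψ⟩⟨ψ|` as a matrix. -/
def projOp {n : Type*} (ψ : n → ℂ) : Matrix n n ℂ :=
  Matrix.vecMulVec ψ (star ψ)

/-- `S_r`: states of Schmidt number at most `r` (finite convex combinations of projectors
onto unit vectors of Schmidt rank at most `r`). -/
def SNle (dA dB r : ℕ) : Set (Matrix (Fin dA × Fin dB) (Fin dA × Fin dB) ℂ) :=
  { σ | ∃ (N : ℕ) (p : Fin N → ℝ) (ψ : Fin N → (Fin dA × Fin dB → ℂ)),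
      (∀ i, 0 ≤ p i) ∧ (∑ i, p i = 1) ∧
      (∀ i, IsUnitVec (ψ i)) ∧ (∀ i, SchmidtRankLE r (ψ i)) ∧
      σ = ∑ i, (p i : ℂ) • projOp (ψ i) }

/-- An orthonormal family of vectors. -/
def ONFam {n m : ℕ} (e : Fin m → Fin n → ℂ) : Prop :=
  ∀ k l, dotProduct (star (e k)) (e l) = if k = l then 1 else 0



/-! ### Auxiliary lemmas -/

def inn {n : Type*} [Fintype n] (a b : n → ℂ) : ℂ := dotProduct (star a) b

lemma inn_add_right {n : Type*} [Fintype n] (a b c : n → ℂ) :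
    inn a (b + c) = inn a b + inn a c := by simp [inn, dotProduct_add]

lemma inn_smul_right {n : Type*} [Fintype n] (a b : n → ℂ) (s : ℂ) :
    inn a (s • b) = s * inn a b := by simp [inn, dotProduct_smul]

lemma inn_smul_left {n : Type*} [Fintype n] (a b : n → ℂ) (s : ℂ) :
    inn (s • a) b = star s * inn a b := by simp [inn, smul_dotProduct]

lemma inn_add_left {n : Type*} [Fintype n] (a b c : n → ℂ) :
    inn (a + b) c = inn a c + inn b c := by simp [inn, add_dotProduct]

lemma inn_sub_right {n : Type*} [Fintype n] (a b c : n → ℂ) :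
    inn a (b - c) = inn a b - inn a c := by simp [inn, dotProduct_sub]

lemma star_inn {n : Type*} [Fintype n] (a b : n → ℂ) :
    star (inn a b) = inn b a := by
  simp [inn, dotProduct, Finset.sum_comm, mul_comm]

lemma inn_sum_right {n : Type*} [Fintype n] {m : Type*} (s : Finset m)
    (a : n → ℂ) (b : m → n → ℂ) :
    inn a (∑ j ∈ s, b j) = ∑ j ∈ s, inn a (b j) := by
  simp [inn, dotProduct, Finset.mul_sum]
  rw [Finset.sum_comm]

lemma inn_sum_left {n : Type*} [Fintype n] {m : Type*} (s : Finset m)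
    (a : n → ℂ) (b : m → n → ℂ) :
    inn (∑ j ∈ s, b j) a = ∑ j ∈ s, inn (b j) a := by
  rw [← star_inn, inn_sum_right, star_sum]
  simp [star_inn]

lemma inn_self_real {n : Type*} [Fintype n] (a : n → ℂ) :
    inn a a = ((inn a a).re : ℂ) :=
  (Complex.conj_eq_iff_re.mp (by rw [← Complex.star_def]; exact star_inn a a)).symm

lemma inn_tensor {dA dB : ℕ} (x x' : Fin dA → ℂ) (y y' : Fin dB → ℂ) :
    inn (tensorVec x y) (tensorVec x' y') = inn x x' * inn y y' := by
  simp only [inn, dotProduct, tensorVec, Pi.star_apply, Fintype.sum_prod_type,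
    Finset.sum_mul, Finset.mul_sum, star_mul']
  rw [Finset.sum_comm]
  apply Finset.sum_congr rfl; intro i _
  apply Finset.sum_congr rfl; intro j _
  ring

lemma herm_swap {dA dB : ℕ} (L : Matrix (Fin dA × Fin dB) (Fin dA × Fin dB) ℂ)
    (hL : L.IsHermitian) (x y : Fin dA × Fin dB → ℂ) :
    inn x (L.mulVec y) = star (inn y (L.mulVec x)) := by
  simp only [inn, dotProduct, Matrix.mulVec, star_sum, star_mul', Pi.star_apply,
    Finset.mul_sum, star_star]
  rw [Finset.sum_comm]
  apply Finset.sum_congr rfl; intro p _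
  apply Finset.sum_congr rfl; intro q _
  rw [← hL.apply q p]
  ring

lemma quad_zero (α β : ℝ) (h : ∀ t : ℝ, |t| ≤ 1/2 → α*t + β*t^2 ≤ 0) : α = 0 := by
  by_contra hα
  have hα' : 0 < |α| := abs_pos.mpr hα
  have hβ1 : 0 < |β| + 1 := by positivity
  set t0 : ℝ := min (1/2) (|α|/(2*(|β|+1))) with ht0
  have ht0pos : 0 < t0 := lt_min (by norm_num) (by positivity)
  have ht0le : t0 ≤ 1/2 := min_le_left _ _
  have ht0le2 : t0 ≤ |α|/(2*(|β|+1)) := min_le_right _ _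
  have h1 := h t0 (by rw [abs_of_pos ht0pos]; exact ht0le)
  have h2 := h (-t0) (by rw [abs_neg, abs_of_pos ht0pos]; exact ht0le)
  have key : |α| * t0 ≤ |β| * t0^2 := by
    rcases abs_cases α with ⟨ha, _⟩ | ⟨ha, _⟩ <;> rcases abs_cases β with ⟨hb, _⟩ | ⟨hb, _⟩ <;>
      nlinarith
  have h3 : t0 * (2*(|β|+1)) ≤ |α| := by
    rw [div_eq_mul_inv] at ht0le2
    calc t0 * (2*(|β|+1)) ≤ (|α| * (2*(|β|+1))⁻¹) * (2*(|β|+1)) := by nlinarith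
    _ = |α| := by field_simp
  nlinarith

lemma unit_coord_le {n : Type*} [Fintype n] (ψ : n → ℂ)
    (h : dotProduct (star ψ) ψ = 1) (p : n) : ‖ψ p‖ ≤ 1 := by
  have h1 : ((∑ q, Complex.normSq (ψ q) : ℝ) : ℂ) = 1 := by
    rw [← h]; simp [dotProduct, Complex.star_def, Complex.normSq_eq_conj_mul_self]
  have h2 : ∑ q, Complex.normSq (ψ q) = 1 := by exact_mod_cast h1
  have h3 : Complex.normSq (ψ p) ≤ 1 := by
    rw [← h2]
    exact Finset.single_le_sum (fun q _ => Complex.normSq_nonneg _) (Finset.mem_univ p)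
  have : ‖ψ p‖^2 ≤ 1 := by rwa [← Complex.sq_norm] at h3
  nlinarith [norm_nonneg (ψ p)]

lemma fr_bdd {dA dB : ℕ} (r : ℕ) (L : Matrix (Fin dA × Fin dB) (Fin dA × Fin dB) ℂ) :
    BddAbove { t | ∃ ψ, IsUnitVec ψ ∧ SchmidtRankLE r ψ ∧ (expVal L ψ).re = t } := by
  refine ⟨∑ p, ∑ q, ‖L p q‖, ?_⟩
  rintro t ⟨ψ, hu, -, rfl⟩
  calc (expVal L ψ).re ≤ ‖expVal L ψ‖ := Complex.re_le_norm _
  _ ≤ ∑ p, ‖star (ψ p) * L.mulVec ψ p‖ := by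
      refine le_trans (le_of_eq ?_) (norm_sum_le _ _)
      rfl
  _ ≤ ∑ p, ∑ q, ‖L p q‖ := by
      refine Finset.sum_le_sum fun p _ => ?_
      rw [norm_mul, norm_star]
      calc ‖ψ p‖ * ‖L.mulVec ψ p‖ ≤ 1 * ‖L.mulVec ψ p‖ :=
            mul_le_mul_of_nonneg_right (unit_coord_le ψ hu p) (norm_nonneg _)
      _ = ‖∑ q, L p q * ψ q‖ := by rw [one_mul]; rfl
      _ ≤ ∑ q, ‖L p q * ψ q‖ := norm_sum_le _ _
      _ ≤ ∑ q, ‖L p q‖ := by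
            refine Finset.sum_le_sum fun q _ => ?_
            rw [norm_mul]
            exact mul_le_of_le_one_right (norm_nonneg _) (unit_coord_le ψ hu q)

lemma tensor_smul_right {dA dB : ℕ} (x : Fin dA → ℂ) (y : Fin dB → ℂ) (s : ℂ) :
    tensorVec x (s • y) = s • tensorVec x y := by
  funext p; simp [tensorVec]; ring

lemma schmidt_smul {dA dB r : ℕ} (ψ : Fin dA × Fin dB → ℂ) (s : ℂ)
    (h : SchmidtRankLE r ψ) : SchmidtRankLE r (s • ψ) := by
  obtain ⟨x, y, hxy⟩ := h
  exact ⟨x, fun j => s • y j, by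
    rw [hxy, Finset.smul_sum]
    exact Finset.sum_congr rfl fun j _ => (tensor_smul_right _ _ _).symm⟩

lemma inn_expand {n : Type*} [Fintype n] (x y w z : n → ℂ) (s : ℂ) :
    inn (x + s • y) (w + s • z)
      = inn x w + s * inn x z + star s * inn y w + star s * s * inn y z := by
  rw [inn_add_left, inn_add_right, inn_add_right, inn_smul_left, inn_smul_left,
    inn_smul_right, inn_smul_right]
  ring

lemma schmidt_perturb {dA dB r : ℕ} (lam : Fin r → ℝ) (e : Fin r → Fin dA → ℂ)
    (f : Fin r → Fin dB → ℂ) (k k' : Fin r) (s : ℂ) :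
    SchmidtRankLE r ((∑ j, (lam j : ℂ) • tensorVec (e j) (f j))
      + s • tensorVec (e k) (f k')) := by
  classical
  refine ⟨e, fun j => (lam j : ℂ) • f j + (if j = k then s else 0) • f k', ?_⟩
  funext p
  simp only [Finset.sum_apply, Pi.add_apply, Pi.smul_apply, tensorVec, smul_eq_mul,
    Pi.zero_apply, mul_ite, mul_zero, mul_add, ite_mul, zero_mul]
  rw [Finset.sum_add_distrib]
  congr 1
  · apply Finset.sum_congr rfl; intros; ring
  · rw [Finset.sum_ite_eq' Finset.univ k]
    simp
    ring

set_option maxHeartbeats 3200000 in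
/-- first-order optimality (the r-Schmidt eigenvalue equations) at a maximizer:
if the unit vector ψ = Σ λ_k e_k ⊗ f_k (λ_k > 0, orthonormal families) attains f_r(L) with
g = ⟨ψ, L ψ⟩ = f_r(L), then ⟨e_k ⊗ f_k', L ψ⟩ = g λ_k δ_{k,k'}; equivalently
χ = L ψ − g ψ is orthogonal to every e_k ⊗ f_k'. -/
theorem rSE_equations_at_maximizer (dA dB r : ℕ) (hA : 1 ≤ dA) (hB : 1 ≤ dB)
    (hr : 1 ≤ r) (hrd : r ≤ min dA dB)
    (L : Matrix (Fin dA × Fin dB) (Fin dA × Fin dB) ℂ) (hL : L.IsHermitian)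
    (lam : Fin r → ℝ) (hlam : ∀ k, 0 < lam k)
    (e : Fin r → Fin dA → ℂ) (f : Fin r → Fin dB → ℂ)
    (hONe : ONFam e) (hONf : ONFam f)
    (ψ : Fin dA × Fin dB → ℂ)
    (hψ : ψ = ∑ k, (lam k : ℂ) • tensorVec (e k) (f k))
    (hunit : IsUnitVec ψ)
    (hmax : (expVal L ψ).re = fr r L) :
    (∀ k k' : Fin r,
      dotProduct (star (tensorVec (e k) (f k'))) (L.mulVec ψ)
        = if k = k' then ((fr r L * lam k : ℝ) : ℂ) else 0) ∧
    (∀ k k' : Fin r,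
      dotProduct (star (tensorVec (e k) (f k')))
        (L.mulVec ψ - ((fr r L : ℝ) : ℂ) • ψ) = 0) := by
  classical
  set g := fr r L with hg
  have hONe' : ∀ j l, inn (e j) (e l) = if j = l then 1 else 0 := hONe
  have hONf' : ∀ j l, inn (f j) (f l) = if j = l then 1 else 0 := hONf
  have hψψ : inn ψ ψ = 1 := hunit
  have hlamsq : ((∑ j, (lam j)^2 : ℝ) : ℂ) = 1 := by
    rw [← hψψ]
    conv_rhs => rw [hψ, inn_sum_left]
    simp_rw [inn_sum_right, inn_smul_left, inn_smul_right, inn_tensor, hONe', hONf']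
    push_cast
    simp [Finset.sum_ite_eq', Complex.star_def, Complex.conj_ofReal, sq]
  have hlamsum : ∑ j, (lam j)^2 = 1 := by exact_mod_cast hlamsq
  have hlamle : ∀ j, lam j ≤ 1 := by
    intro j
    have h1 : (lam j)^2 ≤ 1 := by
      rw [← hlamsum]
      exact Finset.single_le_sum (f := fun i => (lam i)^2) (fun i _ => sq_nonneg _) (Finset.mem_univ j)
    nlinarith [hlam j]
  have hgval : inn ψ (L.mulVec ψ) = ((g : ℝ) : ℂ) := by
    have h1 := herm_swap L hL ψ ψ
    have h2 : inn ψ (L.mulVec ψ) = ((inn ψ (L.mulVec ψ)).re : ℂ) :=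
      (Complex.conj_eq_iff_re.mp (by rw [← Complex.star_def]; exact h1.symm)).symm
    rw [h2]
    exact_mod_cast hmax
  have hsup : ∀ φ', IsUnitVec φ' → SchmidtRankLE r φ' → (expVal L φ').re ≤ g :=
    fun φ' h1 h2 => le_csSup (fr_bdd r L) ⟨φ', h1, h2, rfl⟩
  have hinnφψ : ∀ k k' : Fin r,
      inn (tensorVec (e k) (f k')) ψ = if k = k' then ((lam k : ℝ) : ℂ) else 0 := by
    intro k k'
    rw [hψ, inn_sum_right]
    simp_rw [inn_smul_right, inn_tensor, hONe', hONf']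
    simp only [Finset.sum_ite_eq, Finset.mem_univ, if_true, mul_ite, mul_zero, mul_one, ite_mul, zero_mul]
    rcases eq_or_ne k k' with h | h <;> simp [h, eq_comm]
  have main : ∀ k k' : Fin r, inn (tensorVec (e k) (f k')) (L.mulVec ψ)
      = if k = k' then ((g * lam k : ℝ) : ℂ) else 0 := by
    intro k k'
    set φ := tensorVec (e k) (f k') with hφ
    set D : ℂ := if k = k' then ((lam k : ℝ) : ℂ) else 0 with hD
    set a := inn φ (L.mulVec ψ) with hadef
    set b := inn φ (L.mulVec φ) with hbdef
    have hφφ : inn φ φ = 1 := by rw [hφ, inn_tensor, hONe', hONf']; simp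
    have hφψ : inn φ ψ = D := hinnφψ k k'
    have hDstar : star D = D := by
      rw [hD]; split <;> simp [Complex.star_def, Complex.conj_ofReal]
    have hDim : D.im = 0 := by rw [hD]; split <;> simp
    have hDnorm : ‖D‖ ≤ 1 := by
      rw [hD]; split
      · rw [Complex.norm_real, Real.norm_eq_abs, abs_of_pos (hlam k)]
        exact hlamle k
      · simp
    have hψφ : inn ψ φ = D := by rw [← star_inn, hφψ, hDstar]
    have hstar_a : inn ψ (L.mulVec φ) = star a := by rw [hadef]; exact herm_swap L hL ψ φ
    have hbim : b.im = 0 := by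
      have := (herm_swap L hL φ φ).symm
      rw [← hbdef] at this
      have h2 := congrArg Complex.im this
      simp only [Complex.star_def, Complex.conj_im] at h2
      linarith
    have hpert : ∀ c : ℂ, ‖c‖ = 1 →
        (starRingEnd ℂ c * a).re = g * (starRingEnd ℂ c * D).re := by
      intro c hc
      have hq : 2*((starRingEnd ℂ c * a).re - g*((starRingEnd ℂ c * D).re)) = 0 := by
        apply quad_zero _ (b.re - g)
        intro t ht
        set s : ℂ := (t:ℂ) * c with hs
        have hstars : star s = (t:ℂ) * starRingEnd ℂ c := by
          rw [hs, Complex.star_def, map_mul, Complex.conj_ofReal]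
        have hcc : starRingEnd ℂ c * c = 1 := by
          rw [mul_comm, Complex.mul_conj]
          rw [Complex.normSq_eq_norm_sq]
          rw [show ‖c‖ = 1 from hc]
          norm_num
        have hss : star s * s = (((t:ℝ)^2 : ℝ) : ℂ) := by
          rw [hstars, hs]
          push_cast
          calc (t:ℂ) * starRingEnd ℂ c * ((t:ℂ) * c)
              = (t:ℂ)^2 * (starRingEnd ℂ c * c) := by ring
          _ = (t:ℂ)^2 := by rw [hcc, mul_one]
        set u : Fin dA × Fin dB → ℂ := ψ + s • φ with hu
        have hurank : SchmidtRankLE r u := by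
          rw [hu, hψ, hφ]
          exact schmidt_perturb lam e f k k' s
        have hNre : (inn u u).re = 1 + 2*t*(starRingEnd ℂ c * D).re + t^2 := by
          rw [hu, inn_expand, hψψ, hψφ, hφψ, hφφ, hss, hs, hstars]
          simp only [Complex.add_re, Complex.one_re, Complex.mul_re, Complex.mul_im,
            Complex.ofReal_re, Complex.ofReal_im, mul_one,
            Complex.conj_re, Complex.conj_im, hDim]
          ring
        have hEre : (inn u (L.mulVec u)).re
            = g + 2*t*(starRingEnd ℂ c * a).re + t^2 * b.re := by
          have hmv : L.mulVec u = L.mulVec ψ + s • L.mulVec φ := by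
            rw [hu, Matrix.mulVec_add, Matrix.mulVec_smul]
          rw [hu, hmv, inn_expand, hgval, hstar_a, ← hadef, ← hbdef, hss, hs, hstars]
          simp only [Complex.add_re, Complex.mul_re, Complex.mul_im, Complex.star_def,
            Complex.ofReal_re, Complex.ofReal_im, Complex.conj_re, Complex.conj_im]
          ring
        have hXle : |(starRingEnd ℂ c * D).re| ≤ 1 := by
          calc |(starRingEnd ℂ c * D).re| ≤ ‖starRingEnd ℂ c * D‖ := Complex.abs_re_le_norm _
          _ = ‖starRingEnd ℂ c‖ * ‖D‖ := norm_mul _ _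
          _ ≤ 1 * 1 := by
              rw [RCLike.norm_conj, hc]
              exact mul_le_mul_of_nonneg_left hDnorm zero_le_one
          _ = 1 := one_mul 1
        have hNpos : 0 < (inn u u).re := by
          rw [hNre]
          have h5 : t * (starRingEnd ℂ c * D).re ≥ -(|t| * |(starRingEnd ℂ c * D).re|) := by
            rw [← abs_mul]
            exact neg_abs_le _
          have h6 := abs_le.mp ht
          have h7 := abs_nonneg t
          nlinarith [sq_abs t, sq_nonneg (1 - |t|)]
        set N := (inn u u).re with hNdef
        have huuc : inn u u = ((N : ℝ) : ℂ) := inn_self_real u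
        set nn := Real.sqrt N with hnn
        have hnpos : 0 < nn := Real.sqrt_pos.mpr hNpos
        have hnsq : nn^2 = N := Real.sq_sqrt hNpos.le
        set v := ((nn⁻¹ : ℝ) : ℂ) • u with hv
        have hvu : IsUnitVec v := by
          show inn v v = 1
          rw [hv, inn_smul_left, inn_smul_right, huuc, Complex.star_def,
            Complex.conj_ofReal, ← Complex.ofReal_mul, ← Complex.ofReal_mul]
          norm_cast
          field_simp
          nlinarith [hnsq]
        have hvr : SchmidtRankLE r v := schmidt_smul _ _ hurank
        have hle := hsup v hvu hvr
        have hev : (expVal L v).re = (nn⁻¹ * nn⁻¹) * (inn u (L.mulVec u)).re := by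
          show (inn v (L.mulVec v)).re = _
          rw [hv, Matrix.mulVec_smul, inn_smul_left, inn_smul_right, Complex.star_def,
            Complex.conj_ofReal, ← mul_assoc, ← Complex.ofReal_mul, Complex.re_ofReal_mul]
        rw [hev] at hle
        have hEN : (inn u (L.mulVec u)).re ≤ g * N := by
          have h6 : nn⁻¹ * nn⁻¹ = N⁻¹ := by
            rw [← hnsq, sq, mul_inv]
          rw [h6] at hle
          have h7 := mul_le_mul_of_nonneg_left hle hNpos.le
          rw [← mul_assoc, mul_inv_cancel₀ (ne_of_gt hNpos), one_mul] at h7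
          linarith
        rw [hEre, hNre] at hEN
        nlinarith [hEN]
      linarith
    have h1 := hpert 1 (by norm_num)
    have h2 := hpert Complex.I (by simp)
    simp only [map_one, one_mul] at h1
    have hIc : starRingEnd ℂ Complex.I = -Complex.I := Complex.conj_I
    rw [hIc] at h2
    simp only [neg_mul, Complex.neg_re, Complex.mul_re, Complex.I_re, Complex.I_im,
      zero_mul, one_mul, zero_sub, neg_neg, hDim, mul_zero] at h2
    -- h2 : a.im = g * 0 (roughly)
    have haim : a.im = 0 := by linarith [h2]
    have hafin : a = ((g * D.re : ℝ) : ℂ) := by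
      apply Complex.ext
      · simpa using h1
      · simpa using haim
    rw [hafin, hD]
    split
    · simp
    · simp
  constructor
  · exact main
  · intro k k'
    show inn (tensorVec (e k) (f k')) (L.mulVec ψ - ((g:ℝ):ℂ) • ψ) = 0
    rw [inn_sub_right, inn_smul_right, main k k', hinnφψ k k']
    split
    · push_cast; ring
    · simp


end SNpaper
end
end

section
/- (Suitability of a test operator.) Let L be a Hermitian operator on H, let λ_max(L) be its largest eigenvalue, and let 1 ≤ r ≤ min(d_A, d_B). Then f_r(L) = λ_max(L) if and only if the eigenspace of L for the eigenvalue λ_max(L) contains a nonzero vector of Schmidt rank at most r. -/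
open scoped ComplexOrder

noncomputable section

namespace SNpaper

lemma tensorVec_smul_left {dA dB : ℕ} (c : ℂ) (x : Fin dA → ℂ) (y : Fin dB → ℂ) :
    tensorVec (c • x) y = c • tensorVec x y := by
  funext p; simp [tensorVec, mul_assoc]

lemma tensorVec_smul_right {dA dB : ℕ} (c : ℂ) (x : Fin dA → ℂ) (y : Fin dB → ℂ) :
    tensorVec x (c • y) = c • tensorVec x y := by
  funext p; simp [tensorVec]; ring

lemma tensorVec_sum_left {dA dB : ℕ} {ι : Type*} (s : Finset ι) (x : ι → Fin dA → ℂ)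
    (y : Fin dB → ℂ) : tensorVec (∑ k ∈ s, x k) y = ∑ k ∈ s, tensorVec (x k) y := by
  funext p; simp [tensorVec, Finset.sum_mul, Finset.sum_apply]

lemma tensorVec_sum_right {dA dB : ℕ} {ι : Type*} (s : Finset ι) (x : Fin dA → ℂ)
    (y : ι → Fin dB → ℂ) : tensorVec x (∑ k ∈ s, y k) = ∑ k ∈ s, tensorVec x (y k) := by
  funext p; simp [tensorVec, Finset.mul_sum, Finset.sum_apply]

lemma dot_tensor {dA dB : ℕ} (x x' : Fin dA → ℂ) (y y' : Fin dB → ℂ) :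
    dotProduct (star (tensorVec x y)) (tensorVec x' y')
      = dotProduct (star x) x' * dotProduct (star y) y' := by
  simp only [dotProduct, tensorVec, Pi.star_apply, Finset.sum_mul_sum,
    Fintype.sum_prod_type]
  refine Finset.sum_congr rfl fun a _ => Finset.sum_congr rfl fun b _ => ?_
  simp [Complex.star_def, map_mul]; ring

lemma sum_dotProduct' {n ι : Type*} [Fintype n] (s : Finset ι) (f : ι → n → ℂ) (v : n → ℂ) :
    dotProduct (∑ k ∈ s, f k) v = ∑ k ∈ s, dotProduct (f k) v := by
  simp only [dotProduct, Finset.sum_apply, Finset.sum_mul]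
  rw [Finset.sum_comm]

lemma dotProduct_sum' {n ι : Type*} [Fintype n] (s : Finset ι) (v : n → ℂ) (f : ι → n → ℂ) :
    dotProduct v (∑ k ∈ s, f k) = ∑ k ∈ s, dotProduct v (f k) := by
  simp only [dotProduct, Finset.sum_apply, Finset.mul_sum]
  rw [Finset.sum_comm]

lemma dot_sum_tensor {dA dB r : ℕ} (x x' : Fin r → Fin dA → ℂ) (y y' : Fin r → Fin dB → ℂ) :
    dotProduct (star (∑ k, tensorVec (x k) (y k))) (∑ k, tensorVec (x' k) (y' k))
      = ∑ j, ∑ l, dotProduct (star (x j)) (x' l) * dotProduct (star (y j)) (y' l) := by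
  rw [star_sum, sum_dotProduct']
  refine Finset.sum_congr rfl fun j _ => ?_
  rw [dotProduct_sum']
  exact Finset.sum_congr rfl fun l _ => dot_tensor _ _ _ _

lemma star_dot_self {n : Type*} [Fintype n] (v : n → ℂ) :
    dotProduct (star v) v = ((∑ i, Complex.normSq (v i) : ℝ) : ℂ) := by
  simp only [dotProduct, Pi.star_apply, Complex.ofReal_sum]
  refine Finset.sum_congr rfl fun i _ => ?_
  rw [Complex.star_def, Complex.normSq_eq_conj_mul_self]


lemma sum_dite_lt {M : Type*} [AddCommMonoid M] {r m : ℕ} (hm : m ≤ r) (g : Fin m → M) :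
    (∑ j : Fin r, if h : (j : ℕ) < m then g ⟨j, h⟩ else 0) = ∑ j : Fin m, g j := by
  classical
  set F : ℕ → M := fun i => if h : i < m then g ⟨i, h⟩ else 0 with hF
  have h1 : (∑ j : Fin r, if h : (j : ℕ) < m then g ⟨j, h⟩ else 0) = ∑ i ∈ Finset.range r, F i := by
    rw [Finset.sum_range]
  rw [h1, ← Finset.sum_range_add_sum_Ico F hm]
  have h2 : ∑ i ∈ Finset.Ico m r, F i = 0 := by
    apply Finset.sum_eq_zero
    intro i hi
    simp only [Finset.mem_Ico] at hi
    simp only [hF]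
    rw [dif_neg (by omega : ¬ i < m)]
  rw [h2, add_zero, Finset.sum_range]
  refine Finset.sum_congr rfl fun j _ => ?_
  simp [hF]


lemma exists_bounded_decomp {dA dB r : ℕ} (ψ : Fin dA × Fin dB → ℂ)
    (hu : IsUnitVec ψ) (h : SchmidtRankLE r ψ) :
    ∃ (x : Fin r → Fin dA → ℂ) (y : Fin r → Fin dB → ℂ),
      (∀ k i, ‖x k i‖ ≤ 1) ∧ (∀ k i, ‖y k i‖ ≤ 1) ∧
      ψ = ∑ k, tensorVec (x k) (y k) := by
  classical
  obtain ⟨x0, y0, rfl⟩ := h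
  set E := EuclideanSpace ℂ (Fin dB) with hE
  let ι : E ≃ₗ[ℂ] (Fin dB → ℂ) := WithLp.linearEquiv 2 ℂ (Fin dB → ℂ)
  let y' : Fin r → E := fun k => ι.symm (y0 k)
  set W : Submodule ℂ E := Submodule.span ℂ (Set.range y') with hW
  set m := Module.finrank ℂ W with hm'
  have hm : m ≤ r := by
    have h1 := finrank_range_le_card (R := ℂ) y'
    simpa [Set.finrank, Fintype.card_fin] using h1
  let b := stdOrthonormalBasis ℂ W
  have hy : ∀ k, y' k ∈ W := fun k => Submodule.subset_span (Set.mem_range_self k)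
  let Y : Fin r → W := fun k => ⟨y' k, hy k⟩
  let c : Fin r → Fin r → ℂ := fun k j => if h : (j : ℕ) < m then b.repr (Y k) ⟨j, h⟩ else 0
  let eW : Fin r → E := fun j => if h : (j : ℕ) < m then ((b ⟨j, h⟩ : E)) else 0
  let e : Fin r → Fin dB → ℂ := fun j => ι (eW j)
  let x : Fin r → Fin dA → ℂ := fun j => ∑ k, c k j • x0 k
  -- reconstruction of each y0 k
  have key1 : ∀ k, (∑ j, c k j • e j) = y0 k := by
    intro k
    have hsplit : ∀ j : Fin r, c k j • e j
        = if h : (j : ℕ) < m then (b.repr (Y k) ⟨j, h⟩ • ι ((b ⟨j, h⟩ : E))) else 0 := by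
      intro j
      by_cases h : (j : ℕ) < m
      · simp only [c, e, eW, dif_pos h]
      · simp only [c, e, eW, dif_neg h, zero_smul]
    calc (∑ j, c k j • e j)
        = ∑ j : Fin r, (if h : (j : ℕ) < m then (b.repr (Y k) ⟨j, h⟩ • ι ((b ⟨j, h⟩ : E))) else 0) :=
          Finset.sum_congr rfl fun j _ => hsplit j
      _ = ∑ j : Fin m, b.repr (Y k) j • ι ((b j : E)) := sum_dite_lt hm (fun j => b.repr (Y k) j • ι ((b j : E)))
      _ = ι (∑ j : Fin m, b.repr (Y k) j • ((b j : E))) := by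
          rw [map_sum]
          exact Finset.sum_congr rfl fun j _ => (map_smul ι _ _).symm
      _ = y0 k := by
          have h2 : (∑ j : Fin m, b.repr (Y k) j • ((b j : E))) = (Y k : E) := by
            have h3 := congrArg (Subtype.val) (b.sum_repr (Y k))
            rw [← h3]
            push_cast
            rfl
          rw [h2]
          show ι (ι.symm (y0 k)) = y0 k
          exact ι.apply_symm_apply _
  -- decomposition
  have key2 : (∑ j, tensorVec (x j) (e j)) = ∑ k, tensorVec (x0 k) (y0 k) := by
    calc (∑ j, tensorVec (x j) (e j))
        = ∑ j, ∑ k, c k j • tensorVec (x0 k) (e j) := by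
          refine Finset.sum_congr rfl fun j _ => ?_
          rw [show x j = ∑ k, c k j • x0 k from rfl, tensorVec_sum_left]
          exact Finset.sum_congr rfl fun k _ => tensorVec_smul_left _ _ _
      _ = ∑ k, ∑ j, c k j • tensorVec (x0 k) (e j) := Finset.sum_comm
      _ = ∑ k, tensorVec (x0 k) (y0 k) := by
          refine Finset.sum_congr rfl fun k _ => ?_
          rw [← key1 k, tensorVec_sum_right]
          exact Finset.sum_congr rfl fun j _ => (tensorVec_smul_right _ _ _).symm
  -- orthonormality
  have hdot : ∀ u v : E, dotProduct (star (ι u)) (ι v) = (inner ℂ u v : ℂ) := by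
    intro u v
    rw [EuclideanSpace.inner_eq_star_dotProduct, dotProduct_comm]
    rfl
  have key3 : ∀ j l : Fin r, dotProduct (star (e j)) (e l)
      = if j = l ∧ (j : ℕ) < m then 1 else 0 := by
    intro j l
    have h0 : dotProduct (star (e j)) (e l) = (inner ℂ (eW j) (eW l) : ℂ) := hdot _ _
    rw [h0]
    by_cases hj : (j : ℕ) < m
    · by_cases hl : (l : ℕ) < m
      · rw [show eW j = ((b ⟨j, hj⟩ : W) : E) from dif_pos hj,
           show eW l = ((b ⟨l, hl⟩ : W) : E) from dif_pos hl, ← Submodule.coe_inner,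
           orthonormal_iff_ite.mp b.orthonormal]
        by_cases hjl : j = l
        · subst hjl; simp [hj]
        · have hne : (⟨(j : ℕ), hj⟩ : Fin m) ≠ ⟨l, hl⟩ := by
            simp only [ne_eq, Fin.mk.injEq]
            exact fun hc => hjl (Fin.ext hc)
          rw [if_neg hne, if_neg (by simp [hjl])]
      · have hne2 : ¬ (j = l) := fun hc => hl (hc ▸ hj)
        rw [show eW l = 0 from dif_neg hl, inner_zero_right, if_neg (by simp [hne2])]
    · rw [show eW j = 0 from dif_neg hj, inner_zero_left, if_neg (by simp [hj])]
  -- x j = 0 for j ≥ m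
  have hx0 : ∀ j : Fin r, ¬ ((j : ℕ) < m) → x j = 0 := by
    intro j hj
    have : ∀ k, c k j = 0 := fun k => dif_neg hj
    simp [x, this]
  -- norm identity
  have key4 : (1 : ℝ) = ∑ j : Fin r, (if (j : ℕ) < m then (∑ i, Complex.normSq (x j i)) else 0) := by
    have h1 : dotProduct (star (∑ k, tensorVec (x0 k) (y0 k))) (∑ k, tensorVec (x0 k) (y0 k)) = 1 := hu
    rw [← key2, dot_sum_tensor] at h1
    have h2 : ∀ j : Fin r, (∑ l, dotProduct (star (x j)) (x l)
          * dotProduct (star (e j)) (e l))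
        = if (j : ℕ) < m then ((∑ i, Complex.normSq (x j i) : ℝ) : ℂ) else 0 := by
      intro j
      rw [Finset.sum_eq_single j]
      · rw [key3 j j]
        by_cases hj : (j : ℕ) < m
        · simp [hj, star_dot_self]
        · simp [hj]
      · intro l _ hl
        rw [key3 j l, if_neg (fun hc => hl hc.1.symm), mul_zero]
      · intro hc; exact absurd (Finset.mem_univ j) hc
    rw [Finset.sum_congr rfl (fun j _ => h2 j)] at h1
    have h3 : (∑ j : Fin r, if (j : ℕ) < m then ((∑ i, Complex.normSq (x j i) : ℝ) : ℂ) else 0)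
        = (((∑ j : Fin r, if (j : ℕ) < m then (∑ i, Complex.normSq (x j i)) else 0 : ℝ)) : ℂ) := by
      push_cast
      refine Finset.sum_congr rfl fun j _ => ?_
      split <;> simp
    rw [h3] at h1
    exact_mod_cast h1.symm
  have hterm_nonneg : ∀ j : Fin r, 0 ≤ (if (j : ℕ) < m then (∑ i, Complex.normSq (x j i)) else 0) := by
    intro j
    split
    · exact Finset.sum_nonneg fun i _ => Complex.normSq_nonneg _
    · exact le_rfl
  refine ⟨x, e, ?_, ?_, key2.symm⟩
  · intro j i
    by_cases hj : (j : ℕ) < m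
    · have h1 : Complex.normSq (x j i) ≤ ∑ i', Complex.normSq (x j i') :=
        Finset.single_le_sum (fun i' _ => Complex.normSq_nonneg _) (Finset.mem_univ i)
      have h2 : (∑ i', Complex.normSq (x j i')) ≤ 1 := by
        have h3 := Finset.single_le_sum (fun j' (_ : j' ∈ Finset.univ) => hterm_nonneg j') (Finset.mem_univ j)
        rw [← key4] at h3
        simpa [hj] using h3
      have h4 : Complex.normSq (x j i) ≤ 1 := h1.trans h2
      have h5 := Complex.sq_norm (x j i)
      nlinarith [norm_nonneg (x j i)]
    · rw [hx0 j hj]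
      simp
  · intro j i
    by_cases hj : (j : ℕ) < m
    · have h1 : dotProduct (star (e j)) (e j) = 1 := by rw [key3]; simp [hj]
      rw [star_dot_self] at h1
      have h2 : (∑ i', Complex.normSq (e j i')) = 1 := by exact_mod_cast h1
      have h3 : Complex.normSq (e j i) ≤ 1 := by
        rw [← h2]
        exact Finset.single_le_sum (fun i' _ => Complex.normSq_nonneg _) (Finset.mem_univ i)
      have h5 := Complex.sq_norm (e j i)
      nlinarith [norm_nonneg (e j i)]
    · have hz : e j = 0 := by
        show ι (eW j) = 0
        rw [show eW j = 0 from dif_neg hj, map_zero]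
      rw [hz]
      simp


def decompMap (dA dB r : ℕ) (p : (Fin r → Fin dA → ℂ) × (Fin r → Fin dB → ℂ)) :
    Fin dA × Fin dB → ℂ :=
  ∑ k, tensorVec (p.1 k) (p.2 k)

lemma continuous_decompMap (dA dB r : ℕ) : Continuous (decompMap dA dB r) := by
  apply continuous_pi
  intro q
  have h : (fun p => decompMap dA dB r p q)
      = fun p : (Fin r → Fin dA → ℂ) × (Fin r → Fin dB → ℂ) =>
        ∑ k : Fin r, p.1 k q.1 * p.2 k q.2 := by
    funext p
    simp [decompMap, tensorVec, Finset.sum_apply]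
  rw [h]
  exact continuous_finset_sum _ fun k _ =>
    ((Continuous.mul (f := fun p : (Fin r → Fin dA → ℂ) × (Fin r → Fin dB → ℂ) => p.1 k q.1)
      (g := fun p : (Fin r → Fin dA → ℂ) × (Fin r → Fin dB → ℂ) => p.2 k q.2) ((continuous_apply q.1).comp ((continuous_apply k).comp continuous_fst)))
      ((continuous_apply q.2).comp ((continuous_apply k).comp continuous_snd)))

lemma continuous_dot_self (n : Type*) [Fintype n] :
    Continuous (fun ψ : n → ℂ => dotProduct (star ψ) ψ) := by
  have h : (fun ψ : n → ℂ => dotProduct (star ψ) ψ)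
      = fun ψ : n → ℂ => ∑ i, (starRingEnd ℂ) (ψ i) * ψ i := by
    funext ψ; simp [dotProduct, Complex.star_def]
  rw [h]
  exact continuous_finset_sum _ fun i _ =>
    ((Complex.continuous_conj.comp (continuous_apply i)).mul (continuous_apply i))

lemma continuous_quadForm {n : Type*} [Fintype n] (M : Matrix n n ℂ) :
    Continuous (fun ψ : n → ℂ => dotProduct (star ψ) (M.mulVec ψ)) := by
  have h : (fun ψ : n → ℂ => dotProduct (star ψ) (M.mulVec ψ))
      = fun ψ : n → ℂ => ∑ i, (starRingEnd ℂ) (ψ i) * ∑ j, M i j * ψ j := by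
    funext ψ; simp [dotProduct, Matrix.mulVec, Complex.star_def]
  rw [h]
  exact continuous_finset_sum _ fun i _ =>
    ((Complex.continuous_conj.comp (continuous_apply i)).mul
      (continuous_finset_sum _ fun j _ => continuous_const.mul (continuous_apply j)))

lemma isCompact_unitSchmidt (dA dB r : ℕ) :
    IsCompact {ψ : Fin dA × Fin dB → ℂ | IsUnitVec ψ ∧ SchmidtRankLE r ψ} := by
  classical
  set C : Set ((Fin r → Fin dA → ℂ) × (Fin r → Fin dB → ℂ)) :=
    {p | (∀ k i, ‖p.1 k i‖ ≤ 1) ∧ (∀ k i, ‖p.2 k i‖ ≤ 1) ∧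
      IsUnitVec (decompMap dA dB r p)} with hC
  have hCclosed : IsClosed C := by
    have h1 : IsClosed {p : (Fin r → Fin dA → ℂ) × (Fin r → Fin dB → ℂ) |
        ∀ k i, ‖p.1 k i‖ ≤ 1} := by
      have : {p : (Fin r → Fin dA → ℂ) × (Fin r → Fin dB → ℂ) | ∀ k i, ‖p.1 k i‖ ≤ 1}
          = ⋂ k, ⋂ i, {p | ‖p.1 k i‖ ≤ 1} := by
        ext p; simp
      rw [this]
      exact isClosed_iInter fun k => isClosed_iInter fun i =>
        isClosed_le (continuous_norm.comp
          ((continuous_apply i).comp ((continuous_apply k).comp continuous_fst))) continuous_const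
    have h2 : IsClosed {p : (Fin r → Fin dA → ℂ) × (Fin r → Fin dB → ℂ) |
        ∀ k i, ‖p.2 k i‖ ≤ 1} := by
      have : {p : (Fin r → Fin dA → ℂ) × (Fin r → Fin dB → ℂ) | ∀ k i, ‖p.2 k i‖ ≤ 1}
          = ⋂ k, ⋂ i, {p | ‖p.2 k i‖ ≤ 1} := by
        ext p; simp
      rw [this]
      exact isClosed_iInter fun k => isClosed_iInter fun i =>
        isClosed_le (continuous_norm.comp
          ((continuous_apply i).comp ((continuous_apply k).comp continuous_snd))) continuous_const
    have h3 : IsClosed {p : (Fin r → Fin dA → ℂ) × (Fin r → Fin dB → ℂ) |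
        IsUnitVec (decompMap dA dB r p)} := by
      have : {p : (Fin r → Fin dA → ℂ) × (Fin r → Fin dB → ℂ) | IsUnitVec (decompMap dA dB r p)}
          = (fun p => dotProduct (star (decompMap dA dB r p)) (decompMap dA dB r p)) ⁻¹' {1} := by
        ext p; simp [IsUnitVec, Set.mem_preimage]
      rw [this]
      exact IsClosed.preimage ((continuous_dot_self _).comp (continuous_decompMap dA dB r))
        isClosed_singleton
    have : C = {p | ∀ k i, ‖(Prod.fst p) k i‖ ≤ 1}
        ∩ ({p | ∀ k i, ‖(Prod.snd p) k i‖ ≤ 1}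
          ∩ {p | IsUnitVec (decompMap dA dB r p)}) := by
      ext p
      simp only [hC, Set.mem_setOf_eq, Set.mem_inter_iff]
    rw [this]
    exact h1.inter (h2.inter h3)
  have hBcomp : IsCompact
      ((Set.univ.pi fun _ : Fin r => Set.univ.pi fun _ : Fin dA => Metric.closedBall (0:ℂ) 1) ×ˢ
       (Set.univ.pi fun _ : Fin r => Set.univ.pi fun _ : Fin dB => Metric.closedBall (0:ℂ) 1)) := by
    exact (isCompact_univ_pi fun _ => isCompact_univ_pi fun _ => isCompact_closedBall _ _).prod
      (isCompact_univ_pi fun _ => isCompact_univ_pi fun _ => isCompact_closedBall _ _)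
  have hCsub : C ⊆
      ((Set.univ.pi fun _ : Fin r => Set.univ.pi fun _ : Fin dA => Metric.closedBall (0:ℂ) 1) ×ˢ
       (Set.univ.pi fun _ : Fin r => Set.univ.pi fun _ : Fin dB => Metric.closedBall (0:ℂ) 1)) := by
    intro p hp
    obtain ⟨h1, h2, _⟩ := hp
    refine Set.mem_prod.mpr ⟨?_, ?_⟩
    · refine Set.mem_univ_pi.mpr fun k => Set.mem_univ_pi.mpr fun i => ?_
      simpa [Complex.dist_eq] using h1 k i
    · refine Set.mem_univ_pi.mpr fun k => Set.mem_univ_pi.mpr fun i => ?_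
      simpa [Complex.dist_eq] using h2 k i
  have hCcomp : IsCompact C := hBcomp.of_isClosed_subset hCclosed hCsub
  have himg : {ψ : Fin dA × Fin dB → ℂ | IsUnitVec ψ ∧ SchmidtRankLE r ψ}
      = decompMap dA dB r '' C := by
    ext ψ
    constructor
    · rintro ⟨hu, hs⟩
      obtain ⟨x, y, hx, hy, hdec⟩ := exists_bounded_decomp ψ hu hs
      refine ⟨(x, y), ⟨hx, hy, ?_⟩, hdec.symm⟩
      show IsUnitVec (∑ k, tensorVec (x k) (y k))
      rw [← hdec]; exact hu
    · rintro ⟨p, ⟨h1, h2, h3⟩, rfl⟩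
      exact ⟨h3, ⟨p.1, p.2, rfl⟩⟩
  rw [himg]
  exact hCcomp.image (continuous_decompMap dA dB r)


open Matrix in
lemma psd_shift {n : Type*} [Fintype n] [DecidableEq n] (L : Matrix n n ℂ)
    (hL : L.IsHermitian) (lmax : ℝ) (hub : ∀ i, hL.eigenvalues i ≤ lmax) :
    ((lmax : ℂ) • (1 : Matrix n n ℂ) - L).PosSemidef := by
  have h1 : ((lmax : ℂ) • (1 : Matrix n n ℂ)).IsHermitian := by
    unfold Matrix.IsHermitian
    rw [Matrix.conjTranspose_smul, Matrix.conjTranspose_one]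
    congr 1
    simp [Complex.star_def, Complex.conj_ofReal]
  refine Matrix.posSemidef_iff_dotProduct_mulVec.mpr ⟨h1.sub hL, ?_⟩
  intro v
  set U : Matrix n n ℂ := (hL.eigenvectorUnitary : Matrix n n ℂ) with hU
  set w : n → ℂ := (star U) *ᵥ v with hw
  have hsvU : star v ᵥ* U = star w := by
    rw [hw, Matrix.star_mulVec]
    congr 1
    rw [Matrix.star_eq_conjTranspose, Matrix.conjTranspose_conjTranspose]
  have hdots : dotProduct (star v) v = dotProduct (star w) w := by
    conv_rhs => rw [show star w = star v ᵥ* U from hsvU.symm, hw]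
    rw [← Matrix.dotProduct_mulVec, Matrix.mulVec_mulVec,
      (Matrix.mem_unitaryGroup_iff.mp hL.eigenvectorUnitary.2 : U * star U = 1),
      Matrix.one_mulVec]
  have hLquad : dotProduct (star v) (L *ᵥ v)
      = dotProduct (star w) ((Matrix.diagonal (RCLike.ofReal ∘ hL.eigenvalues)) *ᵥ w) := by
    conv_lhs => rw [hL.spectral_theorem, Unitary.conjStarAlgAut_apply]
    rw [← hU, ← Matrix.mulVec_mulVec, ← Matrix.mulVec_mulVec,
      Matrix.dotProduct_mulVec (star v) U, hsvU, hw]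
  have hquad : dotProduct (star v) (((lmax : ℂ) • (1 : Matrix n n ℂ) - L) *ᵥ v)
      = ((∑ i, (lmax - hL.eigenvalues i) * Complex.normSq (w i) : ℝ) : ℂ) := by
    rw [Matrix.sub_mulVec, dotProduct_sub, Matrix.smul_mulVec, Matrix.one_mulVec,
      dotProduct_smul, hdots, hLquad]
    simp only [dotProduct, Pi.star_apply, Matrix.mulVec_diagonal, smul_eq_mul,
      Finset.mul_sum, ← Finset.sum_sub_distrib]
    push_cast
    refine Finset.sum_congr rfl fun i _ => ?_
    rw [Complex.star_def, Complex.normSq_eq_conj_mul_self, Function.comp_apply]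
    push_cast
    norm_num [RCLike.ofReal]
    ring
  rw [hquad, Complex.zero_le_real]
  refine Finset.sum_nonneg fun i _ => mul_nonneg (by linarith [hub i]) (Complex.normSq_nonneg _)


lemma tensorVec_zero_left {dA dB : ℕ} (y : Fin dB → ℂ) :
    tensorVec (0 : Fin dA → ℂ) y = 0 := by
  funext p; simp [tensorVec]

lemma exists_unit_schmidt {dA dB r : ℕ} (hA : 1 ≤ dA) (hB : 1 ≤ dB) (hr : 1 ≤ r) :
    ∃ ψ0 : Fin dA × Fin dB → ℂ, IsUnitVec ψ0 ∧ SchmidtRankLE r ψ0 := by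
  classical
  set xv : Fin dA → ℂ := Pi.single ⟨0, hA⟩ 1 with hxv
  set yv : Fin dB → ℂ := Pi.single ⟨0, hB⟩ 1 with hyv
  have hxd : dotProduct (star xv) xv = 1 := by
    rw [star_dot_self]
    norm_cast
    rw [hxv]
    simp [Pi.single_apply, apply_ite Complex.normSq]
  have hyd : dotProduct (star yv) yv = 1 := by
    rw [star_dot_self]
    norm_cast
    rw [hyv]
    simp [Pi.single_apply, apply_ite Complex.normSq]
  refine ⟨tensorVec xv yv, ?_, ?_⟩
  · show dotProduct (star (tensorVec xv yv)) (tensorVec xv yv) = 1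
    rw [dot_tensor, hxd, hyd, one_mul]
  · refine ⟨fun k => if k = ⟨0, hr⟩ then xv else 0, fun _ => yv, ?_⟩
    rw [Finset.sum_eq_single_of_mem (⟨0, hr⟩ : Fin r) (Finset.mem_univ _)]
    · simp
    · intro k _ hk
      simp [hk, tensorVec_zero_left]

/-- f_r(L) equals the largest eigenvalue of L if and only if the corresponding
eigenspace contains a nonzero vector of Schmidt rank at most r. -/
theorem fr_eq_lmax_iff_eigenspace (dA dB r : ℕ) (hA : 1 ≤ dA) (hB : 1 ≤ dB)
    (hr : 1 ≤ r) (hrd : r ≤ min dA dB)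
    (L : Matrix (Fin dA × Fin dB) (Fin dA × Fin dB) ℂ) (hL : L.IsHermitian)
    (lmax : ℝ) (hlmax : IsGreatest (Set.range hL.eigenvalues) lmax) :
    fr r L = lmax ↔
      ∃ ψ : Fin dA × Fin dB → ℂ, ψ ≠ 0 ∧ SchmidtRankLE r ψ ∧
        L.mulVec ψ = ((lmax : ℝ) : ℂ) • ψ := by
  classical
  set S := { t | ∃ ψ, IsUnitVec ψ ∧ SchmidtRankLE r ψ ∧ (expVal L ψ).re = t } with hS
  have hfrS : fr r L = sSup S := by rw [hS]; rfl
  have hub : ∀ i, hL.eigenvalues i ≤ lmax := fun i => hlmax.2 ⟨i, rfl⟩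
  have hN := psd_shift L hL lmax hub
  have hquad : ∀ ψ : Fin dA × Fin dB → ℂ, IsUnitVec ψ →
      dotProduct (star ψ)
        ((((lmax : ℂ) • (1 : Matrix (Fin dA × Fin dB) (Fin dA × Fin dB) ℂ)) - L).mulVec ψ)
        = (lmax : ℂ) - expVal L ψ := by
    intro ψ hu
    rw [Matrix.sub_mulVec, dotProduct_sub, Matrix.smul_mulVec, Matrix.one_mulVec,
      dotProduct_smul, show dotProduct (star ψ) ψ = 1 from hu]
    rw [smul_eq_mul, mul_one]
    try rfl
  have hbound : ∀ ψ, IsUnitVec ψ → (expVal L ψ).re ≤ lmax := by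
    intro ψ hu
    have h0 := hN.dotProduct_mulVec_nonneg ψ
    rw [hquad ψ hu] at h0
    have h1 := (Complex.le_def.mp h0).1
    simp only [Complex.zero_re, Complex.sub_re, Complex.ofReal_re] at h1
    linarith
  have heig : ∀ ψ, IsUnitVec ψ → (expVal L ψ).re = lmax →
      L.mulVec ψ = ((lmax : ℝ) : ℂ) • ψ := by
    intro ψ hu hv
    have h0 := hN.dotProduct_mulVec_nonneg ψ
    rw [hquad ψ hu] at h0
    have hz : (lmax : ℂ) - expVal L ψ = 0 := by
      obtain ⟨h1, h2⟩ := Complex.le_def.mp h0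
      apply Complex.ext
      · simp [Complex.sub_re, Complex.ofReal_re, hv]
      · rw [← h2]
    have hz2 : (((lmax : ℂ) • (1 : Matrix (Fin dA × Fin dB) (Fin dA × Fin dB) ℂ)) - L).mulVec ψ
        = 0 := (hN.dotProduct_mulVec_zero_iff ψ).mp (by rw [hquad ψ hu, hz])
    rw [Matrix.sub_mulVec, Matrix.smul_mulVec, Matrix.one_mulVec, sub_eq_zero] at hz2
    exact hz2.symm
  have hval : ∀ ψ, IsUnitVec ψ → L.mulVec ψ = ((lmax : ℝ) : ℂ) • ψ →
      (expVal L ψ).re = lmax := by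
    intro ψ hu he
    have h1 : expVal L ψ = (lmax : ℂ) := by
      rw [expVal, he, dotProduct_smul, show dotProduct (star ψ) ψ = 1 from hu]
      simp
    rw [h1, Complex.ofReal_re]
  have hSim : S = (fun ψ => (expVal L ψ).re) '' {ψ | IsUnitVec ψ ∧ SchmidtRankLE r ψ} := by
    ext t
    constructor
    · rintro ⟨ψ, h1, h2, h3⟩; exact ⟨ψ, ⟨h1, h2⟩, h3⟩
    · rintro ⟨ψ, ⟨h1, h2⟩, h3⟩; exact ⟨ψ, h1, h2, h3⟩
  have hKne : {ψ : Fin dA × Fin dB → ℂ | IsUnitVec ψ ∧ SchmidtRankLE r ψ}.Nonempty := by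
    obtain ⟨ψ0, h1, h2⟩ := exists_unit_schmidt hA hB hr
    exact ⟨ψ0, h1, h2⟩
  have hfc : Continuous (fun ψ : Fin dA × Fin dB → ℂ => (expVal L ψ).re) :=
    Complex.continuous_re.comp (continuous_quadForm L)
  have hScomp : IsCompact S := by
    rw [hSim]
    exact (isCompact_unitSchmidt dA dB r).image hfc
  have hSne : S.Nonempty := by
    rw [hSim]
    exact hKne.image _
  have hSub : ∀ t ∈ S, t ≤ lmax := by
    rintro t ⟨ψ, h1, h2, h3⟩
    exact h3 ▸ hbound ψ h1
  constructor
  · intro hfr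
    have hsup : sSup S = lmax := by rw [← hfrS]; exact hfr
    have hmem : lmax ∈ S := hsup ▸ hScomp.sSup_mem hSne
    obtain ⟨ψ, h1, h2, h3⟩ := hmem
    refine ⟨ψ, ?_, h2, heig ψ h1 h3⟩
    intro hzero
    rw [hzero] at h1
    have h4 : (0 : ℂ) = 1 := by simpa [IsUnitVec, dotProduct] using h1
    exact one_ne_zero h4.symm
  · rintro ⟨ψ, hne, hrank, he⟩
    have hex : ∃ p, ψ p ≠ 0 := by
      by_contra h
      push_neg at h
      exact hne (funext h)
    obtain ⟨p0, hp0⟩ := hex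
    set s : ℝ := ∑ p, Complex.normSq (ψ p) with hsdef
    have hs : 0 < s :=
      Finset.sum_pos' (fun _ _ => Complex.normSq_nonneg _)
        ⟨p0, Finset.mem_univ p0, Complex.normSq_pos.mpr hp0⟩
    set c : ℂ := (((Real.sqrt s)⁻¹ : ℝ) : ℂ) with hcdef
    set φ : Fin dA × Fin dB → ℂ := c • ψ with hφdef
    have hreal : ((Real.sqrt s)⁻¹ * (Real.sqrt s)⁻¹ * s : ℝ) = 1 := by
      have h1 : Real.sqrt s ≠ 0 := ne_of_gt (Real.sqrt_pos.mpr hs)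
      field_simp
      rw [Real.sq_sqrt hs.le]
    have huφ : IsUnitVec φ := by
      show dotProduct (star φ) φ = 1
      rw [hφdef, star_smul, smul_dotProduct, dotProduct_smul, star_dot_self,
        ← hsdef]
      rw [hcdef]
      rw [show star ((((Real.sqrt s)⁻¹ : ℝ) : ℂ)) = (((Real.sqrt s)⁻¹ : ℝ) : ℂ) by
        rw [Complex.star_def, Complex.conj_ofReal]]
      rw [smul_eq_mul, smul_eq_mul]
      norm_cast
      rw [← mul_assoc]
      exact hreal
    have hrφ : SchmidtRankLE r φ := by
      obtain ⟨x, y, hxy⟩ := hrank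
      refine ⟨fun k => c • x k, y, ?_⟩
      rw [hφdef, hxy, Finset.smul_sum]
      exact Finset.sum_congr rfl fun k _ => (tensorVec_smul_left c (x k) (y k)).symm
    have heφ : L.mulVec φ = ((lmax : ℝ) : ℂ) • φ := by
      rw [hφdef, Matrix.mulVec_smul, he, smul_comm]
    have hmem : lmax ∈ S := ⟨φ, huφ, hrφ, hval φ huφ heφ⟩
    rw [hfrS]
    exact le_antisymm (csSup_le hSne hSub) (le_csSup ⟨lmax, hSub⟩ hmem)

end SNpaper
end
end
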